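/- Let G be a non-abelian finite p-group and M a central subgroup of G. Then Aut^M_{Z(G)}(G) = Inn(G) if and only if G has nilpotency class 2, γ₂(G) ≤ M, and M is cyclic. -/

import Mathlib

open Subgroup
open scoped commutatorElement

/-! ### Counting lemmas for homomorphisms of finite abelian groups -/

lemma aux_hasEnoughRootsOfUnity {C : Type*} [CommGroup C] [Finite C] [IsCyclic C]
    {n : ℕ} (h : n ∣ Nat.card C) : HasEnoughRootsOfUnity C n := by
  have hcard : 0 < Nat.card C := Nat.card_pos
  constructor
  · obtain ⟨g, hg⟩ := IsCyclic.exists_ofOrder_eq_natCard (α := C)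
    have horder : orderOf (g ^ (Nat.card C / n)) = n := by
      rw [orderOf_pow, hg, Nat.gcd_eq_right (Nat.div_dvd_of_dvd h),
        Nat.div_div_self h hcard.ne']
    refine ⟨g ^ (Nat.card C / n), ?_⟩
    have hpr := IsPrimitiveRoot.orderOf (g ^ (Nat.card C / n))
    rwa [horder] at hpr
  · have hsurj : Function.Surjective (toUnits (G := C)).toMonoidHom := (toUnits (G := C)).surjective
    haveI : IsCyclic Cˣ := isCyclic_of_surjective _ hsurj
    infer_instance

lemma aux_card_monoidHom_cyclic {A C : Type*} [CommGroup A] [Finite A] [CommGroup C] [Finite C]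
    [IsCyclic C] (h : Monoid.exponent A ∣ Nat.card C) :
    Nat.card (A →* C) = Nat.card A := by
  haveI := aux_hasEnoughRootsOfUnity (C := C) h
  obtain ⟨e⟩ := CommGroup.monoidHom_mulEquiv_of_hasEnoughRootsOfUnity A C
  have e2 : (A →* C) ≃* (A →* Cˣ) := MulEquiv.monoidHomCongrRight toUnits
  rw [Nat.card_congr e2.toEquiv, Nat.card_congr e.toEquiv]

def auxHomPiEquiv {A : Type*} [MulOneClass A] {ι : Type*} (C : ι → Type*)
    [∀ i, MulOneClass (C i)] : (A →* ∀ i, C i) ≃ ∀ i, A →* C i where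
  toFun f i := (Pi.evalMonoidHom C i).comp f
  invFun F := Pi.monoidHom F
  left_inv f := rfl
  right_inv F := rfl

lemma aux_isCyclic {p : ℕ} [Fact p.Prime] {A N : Type*}
    [CommGroup A] [Finite A] [CommGroup N] [Finite N]
    (hA : Nontrivial A) (hpA : IsPGroup p A) (hpN : IsPGroup p N)
    (hexp : Monoid.exponent A ∣ Monoid.exponent N)
    (hcard : Nat.card (A →* N) ≤ Nat.card A) : IsCyclic N := by
  classical
  have hp1 : 1 < p := (Fact.out : p.Prime).one_lt
  obtain ⟨ι, hfin, n, h1, ⟨e⟩⟩ := CommGroup.equiv_prod_multiplicative_zmod_of_finite N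
  haveI : Fintype ι := hfin
  haveI hNZ : ∀ i, NeZero (n i) := fun i => ⟨by have := h1 i; omega⟩
  have hcardi : ∀ i, Nat.card (Multiplicative (ZMod (n i))) = n i := fun i => by
    simp [Nat.card_eq_fintype_card, Fintype.card_multiplicative, ZMod.card]
  have hpow : ∀ i, ∃ k, n i = p ^ k := fun i => by
    have hpi : IsPGroup p (Multiplicative (ZMod (n i))) :=
      (hpN.of_equiv e).of_surjective (Pi.evalMonoidHom _ i) (Function.surjective_eval i)
    obtain ⟨k, hk⟩ := IsPGroup.iff_card.mp hpi
    exact ⟨k, by rw [← hcardi i, hk]⟩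
  choose kk hkk using hpow
  rcases subsingleton_or_nontrivial ι with hι | hι
  · cases isEmpty_or_nonempty ι with
    | inl hE =>
      haveI : Subsingleton ((i : ι) → Multiplicative (ZMod (n i))) :=
        ⟨fun a b => funext fun i => isEmptyElim i⟩
      haveI : Subsingleton N := e.toEquiv.subsingleton
      infer_instance
    | inr hNe =>
      haveI : Unique ι := uniqueOfSubsingleton hNe.some
      let e2 : N ≃* Multiplicative (ZMod (n default)) := e.trans (MulEquiv.piUnique _)
      exact isCyclic_of_surjective e2.symm.toMonoidHom e2.symm.surjective
  · exfalso
    obtain ⟨i₀, -, hmax'⟩ :=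
      Finset.exists_max_image Finset.univ kk ⟨Classical.arbitrary ι, Finset.mem_univ _⟩
    obtain ⟨i₁, hi₁⟩ := exists_ne i₀
    have hmax : ∀ i, n i ∣ n i₀ := fun i => by
      rw [hkk i, hkk i₀]; exact pow_dvd_pow p (hmax' i (Finset.mem_univ i))
    have hexpN : Monoid.exponent N ∣ n i₀ := by
      apply Monoid.exponent_dvd_of_forall_pow_eq_one
      intro x
      apply e.injective
      rw [map_pow, map_one]
      funext i
      rw [Pi.pow_apply, Pi.one_apply]
      obtain ⟨k, hdk⟩ := hmax i
      have hy : (e x i) ^ (n i) = 1 := by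
        have h0 := pow_card_eq_one' (x := e x i)
        rwa [hcardi i] at h0
      rw [hdk, pow_mul, hy, one_pow]
    have hexpA : Monoid.exponent A ∣ n i₀ := hexp.trans hexpN
    haveI hFinHom : ∀ i, Finite (A →* Multiplicative (ZMod (n i))) := fun i =>
      Finite.of_injective (fun f => (f : A → Multiplicative (ZMod (n i)))) DFunLike.coe_injective
    have hcardHom : Nat.card (A →* N) = ∏ i, Nat.card (A →* Multiplicative (ZMod (n i))) := by
      rw [Nat.card_congr (((MulEquiv.monoidHomCongrRight e).toEquiv).trans
        (auxHomPiEquiv _)), Nat.card_pi]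
    have hc0 : Nat.card (A →* Multiplicative (ZMod (n i₀))) = Nat.card A :=
      aux_card_monoidHom_cyclic (by rw [hcardi i₀]; exact hexpA)
    have hc1 : 2 ≤ Nat.card (A →* Multiplicative (ZMod (n i₁))) := by
      obtain ⟨J, hJf, m, hm1, ⟨eA⟩⟩ := CommGroup.equiv_prod_multiplicative_zmod_of_finite A
      haveI : Fintype J := hJf
      haveI : Nonempty J := by
        by_contra hJ
        haveI : IsEmpty J := not_nonempty_iff.mp hJ
        haveI : Subsingleton ((j : J) → Multiplicative (ZMod (m j))) :=
          ⟨fun a b => funext fun j => isEmptyElim j⟩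
        exact not_subsingleton A (eA.toEquiv.subsingleton)
      set j₀ := Classical.arbitrary J with hj₀
      haveI : NeZero (m j₀) := ⟨by have := hm1 j₀; omega⟩
      have hpj : ∃ s, m j₀ = p ^ s := by
        have hpj' : IsPGroup p (Multiplicative (ZMod (m j₀))) :=
          (hpA.of_equiv eA).of_surjective (Pi.evalMonoidHom _ j₀) (Function.surjective_eval j₀)
        obtain ⟨s, hs⟩ := IsPGroup.iff_card.mp hpj'
        refine ⟨s, ?_⟩
        rw [← hs]
        simp [Nat.card_eq_fintype_card, Fintype.card_multiplicative, ZMod.card]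
      obtain ⟨s, hs⟩ := hpj
      have ht := hkk i₁
      set t := kk i₁ with htdef
      have hs1 : 1 ≤ s := by
        rcases Nat.eq_zero_or_pos s with h0 | h0
        · rw [h0, pow_zero] at hs; have := hm1 j₀; omega
        · exact h0
      have ht1 : 1 ≤ t := by
        rcases Nat.eq_zero_or_pos t with h0 | h0
        · rw [h0, pow_zero] at ht; have := h1 i₁; omega
        · exact h0
      set c : ZMod (n i₁) := ((p ^ (t - 1) : ℕ) : ZMod (n i₁)) with hcdef
      have hpf : (zmultiplesHom (ZMod (n i₁)) c) ((m j₀ : ℕ) : ℤ) = 0 := by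
        show ((m j₀ : ℕ) : ℤ) • c = 0
        rw [zsmul_eq_mul, Int.cast_natCast, hcdef]
        have h2 : ((m j₀ : ℕ) : ZMod (n i₁)) * ((p ^ (t - 1) : ℕ) : ZMod (n i₁))
            = (((m j₀ * p ^ (t - 1)) : ℕ) : ZMod (n i₁)) := by push_cast; ring
        rw [h2, ZMod.natCast_eq_zero_iff]
        rw [ht, hs, ← pow_add]
        exact pow_dvd_pow p (by omega)
      let g : ZMod (m j₀) →+ ZMod (n i₁) := ZMod.lift (m j₀) ⟨zmultiplesHom _ c, hpf⟩
      let φ : A →* Multiplicative (ZMod (n i₁)) :=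
        (AddMonoidHom.toMultiplicative g).comp
          ((Pi.evalMonoidHom (fun j => Multiplicative (ZMod (m j))) j₀).comp eA.toMonoidHom)
      have hφ : φ (eA.symm (Pi.mulSingle j₀ (Multiplicative.ofAdd (1 : ZMod (m j₀)))))
          = Multiplicative.ofAdd c := by
        simp only [φ, MonoidHom.comp_apply, MulEquiv.coe_toMonoidHom, MulEquiv.apply_symm_apply,
          Pi.evalMonoidHom_apply, Pi.mulSingle_eq_same]
        show Multiplicative.ofAdd (g (1 : ZMod (m j₀))) = Multiplicative.ofAdd c
        congr 1
        have h3 : (1 : ZMod (m j₀)) = ((1 : ℤ) : ZMod (m j₀)) := by norm_cast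
        rw [h3]
        show (ZMod.lift (m j₀) ⟨zmultiplesHom _ c, hpf⟩) (((1 : ℤ) : ZMod (m j₀))) = c
        rw [ZMod.lift_coe]
        exact one_zsmul c
      have hφne : φ (eA.symm (Pi.mulSingle j₀ (Multiplicative.ofAdd (1 : ZMod (m j₀))))) ≠ 1 := by
        rw [hφ]
        intro hcon
        have hc0' : c = 0 := by
          have := congrArg Multiplicative.toAdd hcon
          simpa using this
        rw [hcdef] at hc0'
        have hdvd := (ZMod.natCast_eq_zero_iff _ _).mp hc0'
        rw [ht] at hdvd
        have := (Nat.pow_dvd_pow_iff_le_right hp1).mp hdvd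
        omega
      have : Nontrivial (A →* Multiplicative (ZMod (n i₁))) :=
        ⟨φ, 1, fun hcon => hφne (by rw [hcon]; rfl)⟩
      exact Finite.one_lt_card_iff_nontrivial.mpr this
    have hprod : Nat.card A * 2 ≤ ∏ i, Nat.card (A →* Multiplicative (ZMod (n i))) := by
      calc Nat.card A * 2
          ≤ Nat.card (A →* Multiplicative (ZMod (n i₀))) *
              Nat.card (A →* Multiplicative (ZMod (n i₁))) := by
            rw [hc0]; exact Nat.mul_le_mul_left _ hc1
        _ = ∏ i ∈ ({i₀, i₁} : Finset ι), Nat.card (A →* Multiplicative (ZMod (n i))) :=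
            (Finset.prod_pair (f := fun i => Nat.card (A →* Multiplicative (ZMod (n i)))) hi₁.symm).symm
        _ ≤ ∏ i, Nat.card (A →* Multiplicative (ZMod (n i))) :=
            Finset.prod_le_prod_of_subset_of_one_le' (Finset.subset_univ _)
              (fun i _ _ => Nat.one_le_iff_ne_zero.mpr (Nat.card_pos (α := _)).ne')
    have hApos : 0 < Nat.card A := Nat.card_pos
    rw [hcardHom] at hcard
    omega

/-! ### Group-theoretic glue -/

section Glue

variable {G : Type*} [Group G]

lemma aux_commutator_mem (hc : commutator G ≤ M) (x g : G) :
    x⁻¹ * (g * x * g⁻¹) ∈ M := by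
  have h : x⁻¹ * (g * x * g⁻¹) = ⁅x⁻¹, g⁆ := by group
  rw [h]
  exact hc (Subgroup.commutator_mem_commutator (Subgroup.mem_top _) (Subgroup.mem_top _))

lemma aux_conj_h1 (M : Subgroup G) (hc : commutator G ≤ M) (g x : G) :
    x⁻¹ * (MulAut.conj g) x ∈ M := by
  have h : (MulAut.conj g) x = g * x * g⁻¹ := rfl
  rw [h]
  exact aux_commutator_mem hc x g

lemma aux_conj_h2 (g : G) : ∀ z ∈ Subgroup.center G, (MulAut.conj g) z = z := by
  intro z hz
  have h : (MulAut.conj g) z = g * z * g⁻¹ := rfl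
  rw [h, Subgroup.mem_center_iff.mp hz g, mul_inv_cancel_right]

/-- The homomorphism `G → M` attached to a central automorphism. -/
def auxF0 (M : Subgroup G) (hM : M ≤ Subgroup.center G) (α : MulAut G)
    (h1 : ∀ x : G, x⁻¹ * α x ∈ M) : G →* ↥M where
  toFun x := ⟨x⁻¹ * α x, h1 x⟩
  map_one' := Subtype.ext (by show (1 : G)⁻¹ * α 1 = 1; simp)
  map_mul' x y := Subtype.ext (by
    show (x * y)⁻¹ * α (x * y) = (x⁻¹ * α x) * (y⁻¹ * α y)
    have hc := Subgroup.mem_center_iff.mp (hM (h1 x))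
    rw [map_mul, mul_inv_rev]
    calc y⁻¹ * x⁻¹ * (α x * α y) = y⁻¹ * (x⁻¹ * α x) * α y := by group
      _ = (x⁻¹ * α x) * y⁻¹ * α y := by rw [hc y⁻¹]
      _ = x⁻¹ * α x * (y⁻¹ * α y) := by group)

/-- The induced homomorphism `G/Z(G) → M`. -/
def auxFhom (M : Subgroup G) (hM : M ≤ Subgroup.center G) (α : MulAut G)
    (h1 : ∀ x : G, x⁻¹ * α x ∈ M) (h2 : ∀ z ∈ Subgroup.center G, α z = z) :
    G ⧸ Subgroup.center G →* ↥M :=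
  QuotientGroup.lift _ (auxF0 M hM α h1) (fun z hz => Subtype.ext (by
    show z⁻¹ * α z = 1
    rw [h2 z hz, inv_mul_cancel]))

lemma auxFhom_mk (M : Subgroup G) (hM : M ≤ Subgroup.center G) (α : MulAut G)
    (h1 : ∀ x : G, x⁻¹ * α x ∈ M) (h2 : ∀ z ∈ Subgroup.center G, α z = z) (x : G) :
    auxFhom M hM α h1 h2 (x : G ⧸ Subgroup.center G) = ⟨x⁻¹ * α x, h1 x⟩ := rfl

/-- The endomorphism attached to a homomorphism `G/Z(G) → M`. -/
def auxAfun (M : Subgroup G) (hM : M ≤ Subgroup.center G)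
    (f : G ⧸ Subgroup.center G →* ↥M) : G →* G where
  toFun x := x * ((f (x : G ⧸ Subgroup.center G) : ↥M) : G)
  map_one' := by simp
  map_mul' x y := by
    have hc := Subgroup.mem_center_iff.mp (hM (f (x : G ⧸ Subgroup.center G)).2)
    show x * y * ((f ((x * y : G) : G ⧸ Subgroup.center G) : ↥M) : G) = _
    rw [QuotientGroup.mk_mul, map_mul, Subgroup.coe_mul]
    calc x * y * (((f (x : G ⧸ Subgroup.center G) : ↥M) : G) *
            ((f (y : G ⧸ Subgroup.center G) : ↥M) : G))
        = x * (y * ((f (x : G ⧸ Subgroup.center G) : ↥M) : G)) *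
            ((f (y : G ⧸ Subgroup.center G) : ↥M) : G) := by group
      _ = x * (((f (x : G ⧸ Subgroup.center G) : ↥M) : G) * y) *
            ((f (y : G ⧸ Subgroup.center G) : ↥M) : G) := by rw [hc y]
      _ = x * ((f (x : G ⧸ Subgroup.center G) : ↥M) : G) *
            (y * ((f (y : G ⧸ Subgroup.center G) : ↥M) : G)) := by group

lemma auxAfun_inj (M : Subgroup G) (hM : M ≤ Subgroup.center G)
    (f : G ⧸ Subgroup.center G →* ↥M) : Function.Injective (auxAfun M hM f) := by
  rw [injective_iff_map_eq_one]
  intro x hx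
  have hx' : x * ((f (x : G ⧸ Subgroup.center G) : ↥M) : G) = 1 := hx
  have hxc : x ∈ Subgroup.center G := by
    have hinv : x = ((f (x : G ⧸ Subgroup.center G) : ↥M) : G)⁻¹ :=
      eq_inv_of_mul_eq_one_left hx'
    rw [hinv]
    exact (Subgroup.center G).inv_mem (hM (f (x : G ⧸ Subgroup.center G)).2)
  have hq : ((x : G ⧸ Subgroup.center G)) = 1 := (QuotientGroup.eq_one_iff x).mpr hxc
  rw [hq, map_one] at hx'
  simpa using hx'

/-- The automorphism attached to a homomorphism `G/Z(G) → M`. -/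
noncomputable def auxAequiv (M : Subgroup G) (hM : M ≤ Subgroup.center G) [Finite G]
    (f : G ⧸ Subgroup.center G →* ↥M) : MulAut G :=
  MulEquiv.ofBijective (auxAfun M hM f)
    (Finite.injective_iff_bijective.mp (auxAfun_inj M hM f))

lemma auxAequiv_apply (M : Subgroup G) (hM : M ≤ Subgroup.center G) [Finite G]
    (f : G ⧸ Subgroup.center G →* ↥M) (x : G) :
    auxAequiv M hM f x = x * ((f (x : G ⧸ Subgroup.center G) : ↥M) : G) := rfl

lemma auxAequiv_h1 (M : Subgroup G) (hM : M ≤ Subgroup.center G) [Finite G]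
    (f : G ⧸ Subgroup.center G →* ↥M) (x : G) :
    x⁻¹ * (auxAequiv M hM f) x ∈ M := by
  rw [auxAequiv_apply, inv_mul_cancel_left]
  exact (f (x : G ⧸ Subgroup.center G)).2

lemma auxAequiv_h2 (M : Subgroup G) (hM : M ≤ Subgroup.center G) [Finite G]
    (f : G ⧸ Subgroup.center G →* ↥M) :
    ∀ z ∈ Subgroup.center G, (auxAequiv M hM f) z = z := by
  intro z hz
  rw [auxAequiv_apply, (QuotientGroup.eq_one_iff z).mpr hz, map_one]
  simp

/-- The map `G/Z(G) → Hom(G/Z(G), M)` induced by conjugation. -/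
def auxKbar (M : Subgroup G) (hM : M ≤ Subgroup.center G) (hc : commutator G ≤ M) :
    G ⧸ Subgroup.center G → (G ⧸ Subgroup.center G →* ↥M) :=
  Quotient.lift (fun g => auxFhom M hM (MulAut.conj g) (aux_conj_h1 M hc g) (aux_conj_h2 g))
    (by
      intro a b hab
      have hz : a⁻¹ * b ∈ Subgroup.center G := (QuotientGroup.leftRel_apply).mp hab
      have hcen := Subgroup.mem_center_iff.mp hz
      apply MonoidHom.ext
      intro q
      refine QuotientGroup.induction_on q (fun x => ?_)
      apply Subtype.ext
      show x⁻¹ * (MulAut.conj a) x = x⁻¹ * (MulAut.conj b) x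
      have hconj : (MulAut.conj a) x = (MulAut.conj b) x := by
        show a * x * a⁻¹ = b * x * b⁻¹
        have hxc : x * (a⁻¹ * b) = (a⁻¹ * b) * x := hcen x
        calc a * x * a⁻¹ = b * ((a⁻¹ * b)⁻¹ * x * (a⁻¹ * b)) * b⁻¹ := by group
          _ = b * ((a⁻¹ * b)⁻¹ * ((a⁻¹ * b) * x)) * b⁻¹ := by rw [← hxc]; group
          _ = b * x * b⁻¹ := by group
      rw [hconj])

lemma auxKbar_mk (M : Subgroup G) (hM : M ≤ Subgroup.center G) (hc : commutator G ≤ M) (g : G) :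
    auxKbar M hM hc (g : G ⧸ Subgroup.center G)
      = auxFhom M hM (MulAut.conj g) (aux_conj_h1 M hc g) (aux_conj_h2 g) := rfl

lemma auxKbar_inj (M : Subgroup G) (hM : M ≤ Subgroup.center G) (hc : commutator G ≤ M) :
    Function.Injective (auxKbar M hM hc) := by
  intro q1 q2
  refine QuotientGroup.induction_on q1 fun a => QuotientGroup.induction_on q2 fun b h => ?_
  rw [auxKbar_mk, auxKbar_mk] at h
  have hx : ∀ x : G, a * x * a⁻¹ = b * x * b⁻¹ := by
    intro x
    have h4 := congrArg Subtype.val (DFunLike.congr_fun h ((x : G ⧸ Subgroup.center G)))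
    have h5 : x⁻¹ * (a * x * a⁻¹) = x⁻¹ * (b * x * b⁻¹) := h4
    exact mul_left_cancel h5
  have hmem : b⁻¹ * a ∈ Subgroup.center G := by
    rw [Subgroup.mem_center_iff]
    intro x
    calc x * (b⁻¹ * a) = b⁻¹ * (b * x * b⁻¹) * a := by group
      _ = b⁻¹ * (a * x * a⁻¹) * a := by rw [hx x]
      _ = (b⁻¹ * a) * x := by group
  have : a⁻¹ * b ∈ Subgroup.center G := by
    have := (Subgroup.center G).inv_mem hmem
    simpa using this
  exact QuotientGroup.eq.mpr this

lemma aux_exp_dvd [Finite G] {M : Subgroup G} (hM : M ≤ Subgroup.center G)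
    (hc : commutator G ≤ M) :
    Monoid.exponent (G ⧸ Subgroup.center G) ∣ Monoid.exponent ↥M := by
  set n := Monoid.exponent ↥M with hn
  apply Monoid.exponent_dvd_of_forall_pow_eq_one
  intro q
  refine QuotientGroup.induction_on q fun x => ?_
  rw [← QuotientGroup.mk_pow, QuotientGroup.eq_one_iff, Subgroup.mem_center_iff]
  intro g
  have hcmem : x⁻¹ * (g * x * g⁻¹) ∈ M := aux_commutator_mem hc x g
  set c := x⁻¹ * (g * x * g⁻¹) with hcdef
  have hcc : ∀ y : G, y * c = c * y := Subgroup.mem_center_iff.mp (hM hcmem)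
  have hcpow : c ^ n = 1 := by
    have hpe : (⟨c, hcmem⟩ : ↥M) ^ n = 1 := Monoid.pow_exponent_eq_one _
    simpa using congrArg Subtype.val hpe
  have key : g * x ^ n * g⁻¹ = x ^ n := by
    have h2 : g * x * g⁻¹ = x * c := by rw [hcdef]; group
    have h3 : g * x ^ n * g⁻¹ = (g * x * g⁻¹) ^ n := by
      simpa [MulAut.conj_apply] using map_pow (MulAut.conj g) x n
    calc g * x ^ n * g⁻¹ = (g * x * g⁻¹) ^ n := h3
      _ = (x * c) ^ n := by rw [h2]
      _ = x ^ n * c ^ n := Commute.mul_pow (hcc x) n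
      _ = x ^ n := by rw [hcpow, mul_one]
  calc g * x ^ n = (g * x ^ n * g⁻¹) * g := by group
    _ = x ^ n * g := by rw [key]

lemma aux_nontrivial (hna : ¬ ∀ a b : G, a * b = b * a) :
    Nontrivial (G ⧸ Subgroup.center G) := by
  rcases subsingleton_or_nontrivial (G ⧸ Subgroup.center G) with h | h
  · exfalso
    apply hna
    intro a b
    have ha : a ∈ Subgroup.center G := by
      rw [← QuotientGroup.eq_one_iff (N := Subgroup.center G) a]
      exact Subsingleton.elim _ _
    exact (Subgroup.mem_center_iff.mp ha b).symm
  · exact h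

/-- `G/Z(G)` is commutative when the commutator is central. -/
def auxCommGroupQuot (hcZ : commutator G ≤ Subgroup.center G) :
    CommGroup (G ⧸ Subgroup.center G) :=
  { (inferInstance : Group (G ⧸ Subgroup.center G)) with
    mul_comm := fun q1 q2 => by
      refine QuotientGroup.induction_on q1 fun x => QuotientGroup.induction_on q2 fun y => ?_
      rw [← QuotientGroup.mk_mul, ← QuotientGroup.mk_mul, QuotientGroup.eq]
      have h : (x * y)⁻¹ * (y * x) = ⁅y⁻¹, x⁻¹⁆ := by group
      rw [h]
      exact hcZ (Subgroup.commutator_mem_commutator (Subgroup.mem_top _) (Subgroup.mem_top _)) }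

/-- A central subgroup is commutative. -/
def auxCommGroupSub {M : Subgroup G} (hM : M ≤ Subgroup.center G) : CommGroup ↥M :=
  { (inferInstance : Group ↥M) with
    mul_comm := fun a b => Subtype.ext (Subgroup.mem_center_iff.mp (hM b.2) a) }

end Glue

/-- For a non-abelian finite p-group G and M ≤ Z(G): Aut^M_{Z(G)}(G) = Inn(G) iff
G has nilpotency class 2, γ₂(G) ≤ M, and M is cyclic. -/
theorem stmt8 {p : ℕ} [Fact p.Prime] {G : Type*} [Group G] [Finite G]
    (hp : IsPGroup p G) (hna : ¬ ∀ a b : G, a * b = b * a)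
    (M : Subgroup G) (hM : M ≤ Subgroup.center G) :
    {α : MulAut G | (∀ x : G, x⁻¹ * α x ∈ M) ∧ ∀ z ∈ Subgroup.center G, α z = z}
        = Set.range (fun g : G => MulAut.conj g) ↔
      (commutator G ≤ Subgroup.center G ∧ commutator G ≤ M ∧ IsCyclic ↥M) := by
  classical
  constructor
  · intro h
    have hconjS : ∀ g : G, (∀ x : G, x⁻¹ * (MulAut.conj g) x ∈ M) ∧
        ∀ z ∈ Subgroup.center G, (MulAut.conj g) z = z := by
      intro g
      have hmem : MulAut.conj g ∈ {α : MulAut G | (∀ x : G, x⁻¹ * α x ∈ M) ∧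
          ∀ z ∈ Subgroup.center G, α z = z} := by
        rw [h]; exact ⟨g, rfl⟩
      exact hmem
    have hcM : commutator G ≤ M := by
      rw [commutator_def, Subgroup.commutator_le]
      intro g1 _ g2 _
      have h6 := (hconjS g2).1 g1⁻¹
      have heq : (g1⁻¹)⁻¹ * (MulAut.conj g2) g1⁻¹ = ⁅g1, g2⁆ := by
        show (g1⁻¹)⁻¹ * (g2 * g1⁻¹ * g2⁻¹) = ⁅g1, g2⁆
        group
      rwa [heq] at h6
    have hcZ : commutator G ≤ Subgroup.center G := hcM.trans hM
    refine ⟨hcZ, hcM, ?_⟩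
    letI iA : CommGroup (G ⧸ Subgroup.center G) := auxCommGroupQuot hcZ
    letI iM : CommGroup ↥M := auxCommGroupSub hM
    have hsurj : Function.Surjective (auxKbar M hM hcM) := by
      intro f
      have hmem : auxAequiv M hM f ∈ Set.range (fun g : G => MulAut.conj g) := by
        rw [← h]
        exact ⟨auxAequiv_h1 M hM f, auxAequiv_h2 M hM f⟩
      obtain ⟨g, hg⟩ := hmem
      have hg' : MulAut.conj g = auxAequiv M hM f := hg
      refine ⟨(g : G ⧸ Subgroup.center G), ?_⟩
      rw [auxKbar_mk]
      apply MonoidHom.ext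
      intro q
      refine QuotientGroup.induction_on q fun x => ?_
      rw [auxFhom_mk]
      apply Subtype.ext
      show x⁻¹ * (MulAut.conj g) x = ((f (x : G ⧸ Subgroup.center G) : ↥M) : G)
      rw [hg', auxAequiv_apply, inv_mul_cancel_left]
    have hcard : Nat.card (G ⧸ Subgroup.center G →* ↥M) ≤ Nat.card (G ⧸ Subgroup.center G) :=
      Nat.card_le_card_of_surjective _ hsurj
    haveI hnt := aux_nontrivial hna
    exact aux_isCyclic (p := p) hnt (hp.to_quotient _) (hp.to_subgroup M)
      (aux_exp_dvd hM hcM) hcard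
  · rintro ⟨hcZ, hcM, hcyc⟩
    letI iA : CommGroup (G ⧸ Subgroup.center G) := auxCommGroupQuot hcZ
    letI iM : CommGroup ↥M := auxCommGroupSub hM
    haveI hFin : Finite (G ⧸ Subgroup.center G →* ↥M) :=
      Finite.of_injective (fun f => (f : (G ⧸ Subgroup.center G) → ↥M)) DFunLike.coe_injective
    have hcardEq : Nat.card (G ⧸ Subgroup.center G →* ↥M) = Nat.card (G ⧸ Subgroup.center G) :=
      @aux_card_monoidHom_cyclic _ _ _ _ _ _ hcyc ((aux_exp_dvd hM hcM).trans (Group.exponent_dvd_nat_card))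
    have hbij : Function.Bijective (auxKbar M hM hcM) :=
      (Nat.bijective_iff_injective_and_card _).mpr ⟨auxKbar_inj M hM hcM, hcardEq.symm⟩
    apply Set.Subset.antisymm
    · intro α hα
      obtain ⟨h1, h2⟩ := hα
      obtain ⟨q, hq⟩ := hbij.2 (auxFhom M hM α h1 h2)
      revert hq
      refine QuotientGroup.induction_on q fun g hq => ?_
      refine ⟨g, ?_⟩
      show MulAut.conj g = α
      rw [auxKbar_mk] at hq
      apply MulEquiv.ext
      intro x
      have h4 := congrArg Subtype.val (DFunLike.congr_fun hq ((x : G ⧸ Subgroup.center G)))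
      have h5 : x⁻¹ * (MulAut.conj g) x = x⁻¹ * α x := h4
      exact mul_left_cancel h5
    · rintro β ⟨g, rfl⟩
      exact ⟨aux_conj_h1 M hcM g, aux_conj_h2 g⟩
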